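/- Let G be a finite simple graph with positive real vertex weights ω, and let v be a simplicial vertex of G (i.e., N(v) is a clique) whose weight is maximum in its closed neighborhood, i.e., ω(v) ≥ ω(u) for all u ∈ N(v). Then α_ω(G) = α_ω(G − N[v]) + ω(v). -/

import Mathlib

open scoped Classical

/-- `S` is an independent set of vertices in `G`: no two members are adjacent. -/
def IsIndepSet {V : Type*} (G : SimpleGraph V) (S : Finset V) : Prop :=
  ∀ a ∈ S, ∀ b ∈ S, ¬ G.Adj a b

/-- The maximum total `w`-weight of an independent set of `G` contained in `A`
(the weighted independence number of the subgraph of `G` induced on `A`). -/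
noncomputable def alphaOn {V : Type*} [Fintype V] (G : SimpleGraph V) (w : V → ℝ)
    (A : Set V) : ℝ :=
  sSup {x : ℝ | ∃ S : Finset V, ↑S ⊆ A ∧ IsIndepSet G S ∧ x = ∑ v ∈ S, w v}

/-- The maximum total `w`-weight of an independent set of `G`. -/
noncomputable def alpha {V : Type*} [Fintype V] (G : SimpleGraph V) (w : V → ℝ) : ℝ :=
  alphaOn G w Set.univ

/-- `S` is a maximum `w`-weight independent set of `G`. -/
def IsMWIS {V : Type*} [Fintype V] (G : SimpleGraph V) (w : V → ℝ) (S : Finset V) : Prop :=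
  IsIndepSet G S ∧ ∑ v ∈ S, w v = alpha G w

/-- The closed neighborhood `N[v]` of a vertex. -/
def closedNbhd {V : Type*} (G : SimpleGraph V) (v : V) : Set V :=
  insert v (G.neighborSet v)

/-- The open neighborhood `N(S)` of a set of vertices. -/
def setNbhd {V : Type*} (G : SimpleGraph V) (S : Set V) : Set V :=
  (⋃ s ∈ S, G.neighborSet s) \ S

/-- The closed neighborhood `N[S]` of a set of vertices. -/
def closedSetNbhd {V : Type*} (G : SimpleGraph V) (S : Set V) : Set V :=
  setNbhd G S ∪ S


section Aux
variable {V : Type*} [Fintype V] (G : SimpleGraph V) (w : V → ℝ)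

lemma alphaOn_bddAbove (A : Set V) :
    BddAbove {x : ℝ | ∃ S : Finset V, ↑S ⊆ A ∧ IsIndepSet G S ∧ x = ∑ v ∈ S, w v} := by
  refine ⟨∑ v, |w v|, ?_⟩
  rintro x ⟨S, -, -, rfl⟩
  calc ∑ v ∈ S, w v ≤ ∑ v ∈ S, |w v| :=
        Finset.sum_le_sum fun i _ => le_abs_self _
    _ ≤ ∑ v, |w v| :=
        Finset.sum_le_sum_of_subset_of_nonneg (Finset.subset_univ S)
          (fun i _ _ => abs_nonneg _)

lemma alphaOn_mem (A : Set V) {S : Finset V} (hS : ↑S ⊆ A) (hI : IsIndepSet G S) :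
    ∑ v ∈ S, w v ≤ alphaOn G w A :=
  le_csSup (alphaOn_bddAbove G w A) ⟨S, hS, hI, rfl⟩

lemma alphaOn_nonneg (A : Set V) : 0 ≤ alphaOn G w A := by
  simpa using alphaOn_mem G w A (S := ∅) (by simp) (by simp [IsIndepSet])

end Aux

theorem stmt_18 {V : Type*} [Fintype V] (G : SimpleGraph V) (w : V → ℝ)
    (hw : ∀ x, 0 < w x) (v : V)
    (hsimp : G.IsClique (G.neighborSet v))
    (hwt : ∀ u ∈ G.neighborSet v, w u ≤ w v) :
    alpha G w = alphaOn G w (closedNbhd G v)ᶜ + w v := by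
  have hbdd := alphaOn_bddAbove G w (closedNbhd G v)ᶜ
  have hvmem : v ∈ closedNbhd G v := Set.mem_insert _ _
  -- alpha ≥ w v
  have hαv : w v ≤ alpha G w := by
    have := alphaOn_mem G w (Set.univ) (S := {v}) (by simp)
      (by intro a ha b hb; simp at ha hb; subst ha; subst hb; simp)
    simpa [alpha] using this
  apply le_antisymm
  · -- alpha ≤ alphaOn + w v
    apply Real.sSup_le
    · rintro x ⟨S, -, hI, rfl⟩
      classical
      set S' := S.filter (fun u => u ∉ closedNbhd G v) with hS'
      set T := S.filter (fun u => u ∈ closedNbhd G v) with hT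
      have hsplit : ∑ u ∈ S, w u = ∑ u ∈ T, w u + ∑ u ∈ S', w u := by
        rw [hT, hS', Finset.sum_filter_add_sum_filter_not]
      have hTle : ∑ u ∈ T, w u ≤ w v := by
        rcases Finset.eq_empty_or_nonempty T with h | ⟨a, ha⟩
        · simp [h]; exact (hw v).le
        · have haT : ∀ b ∈ T, b = a := by
            intro b hb
            by_contra hne
            have ha' := Finset.mem_filter.mp ha
            have hb' := Finset.mem_filter.mp hb
            have hadj : G.Adj b a := by
              rcases hb'.2 with rfl | hbN
              · rcases ha'.2 with rfl | haN
                · exact absurd rfl hne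
                · exact haN
              · rcases ha'.2 with rfl | haN
                · exact (G.adj_symm hbN)
                · exact hsimp hbN haN hne
            exact hI b hb'.1 a ha'.1 hadj
          have : T = {a} := Finset.eq_singleton_iff_unique_mem.mpr ⟨ha, haT⟩
          rw [this, Finset.sum_singleton]
          rcases (Finset.mem_filter.mp ha).2 with rfl | hN
          · exact le_refl _
          · exact hwt a hN
      have hS'le : ∑ u ∈ S', w u ≤ alphaOn G w (closedNbhd G v)ᶜ := by
        apply alphaOn_mem
        · intro u hu
          simp only [hS', Finset.coe_filter, Set.mem_setOf_eq] at hu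
          exact hu.2
        · intro a ha b hb
          exact hI a (Finset.mem_of_mem_filter a ha) b (Finset.mem_of_mem_filter b hb)
      rw [hsplit]
      linarith
    · linarith [alphaOn_nonneg G w (closedNbhd G v)ᶜ, hw v]
  · -- alphaOn + w v ≤ alpha
    have : alphaOn G w (closedNbhd G v)ᶜ ≤ alpha G w - w v := by
      apply Real.sSup_le
      · rintro x ⟨S, hSsub, hI, rfl⟩
        classical
        have hvS : v ∉ S := fun h => (hSsub h) hvmem
        have hins : IsIndepSet G (insert v S) := by
          intro a ha b hb hadj
          rcases Finset.mem_insert.mp ha with ha1 | haS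
          · rcases Finset.mem_insert.mp hb with hb1 | hbS
            · rw [ha1, hb1] at hadj; exact G.loopless.irrefl _ hadj
            · rw [ha1] at hadj
              exact (hSsub hbS) (show b ∈ closedNbhd G v from Or.inr hadj)
          · rcases Finset.mem_insert.mp hb with hb1 | hbS
            · rw [hb1] at hadj
              exact (hSsub haS) (show a ∈ closedNbhd G v from Or.inr (G.adj_symm hadj))
            · exact hI a haS b hbS hadj
        have := alphaOn_mem G w Set.univ (S := insert v S) (by simp) hins
        rw [Finset.sum_insert hvS] at this
        have : w v + ∑ u ∈ S, w u ≤ alpha G w := by simpa [alpha] using this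
        linarith
      · linarith
    linarith
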